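/- With V = R ⊕ (K ⊕ K*) ⊕ N a symplectic direct sum as above and N⊥ a complement to N in K* ⊕ N, let P : V → N be the linear projection with kernel R ⊕ K ⊕ N⊥. Then the restriction of P to the symplectic orthogonal complement (R ⊕ K ⊕ N⊥)^ω is a symplectic isomorphism onto N. -/
import Mathlib


open Module

/-- With `V = R ⊕ (K ⊕ K*) ⊕ N` a symplectic direct sum and `N⊥` a complement
to `N` in `K* ⊕ N`, let `P : V → N` be the linear projection with kernel `W = R ⊕ K ⊕ N⊥`.
Then the restriction of `P` to the symplectic orthogonal complement `W^ω` is a symplectic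
isomorphism onto `N`. -/
theorem projection_of_symplectic_perp_is_symplectic_iso
    (R K N : Type*)
    [AddCommGroup R] [Module ℝ R] [AddCommGroup K] [Module ℝ K]
    [AddCommGroup N] [Module ℝ N]
    [FiniteDimensional ℝ R] [FiniteDimensional ℝ K] [FiniteDimensional ℝ N]
    (ωR : R →ₗ[ℝ] R →ₗ[ℝ] ℝ) (ωN : N →ₗ[ℝ] N →ₗ[ℝ] ℝ)
    (hRalt : ∀ r, ωR r r = 0) (hNalt : ∀ n, ωN n n = 0)
    (hRnd : ∀ r, (∀ r', ωR r r' = 0) → r = 0)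
    (hNnd : ∀ n, (∀ n', ωN n n' = 0) → n = 0)
    (ω : (R × (K × Dual ℝ K) × N) → (R × (K × Dual ℝ K) × N) → ℝ)
    (hω : ∀ v w : R × (K × Dual ℝ K) × N,
      ω v w = ωR v.1 w.1 + (w.2.1.2 v.2.1.1 - v.2.1.2 w.2.1.1) + ωN v.2.2 w.2.2)
    (Nperp : Submodule ℝ (R × (K × Dual ℝ K) × N))
    (hNperpSub : ∀ p ∈ Nperp, p.1 = 0 ∧ p.2.1.1 = 0)
    (hNperpInd : ∀ p ∈ Nperp, p.2.1.2 = 0 → p = 0)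
    (hNperpSpan : ∀ v : R × (K × Dual ℝ K) × N, v.1 = 0 → v.2.1.1 = 0 →
      ∃ p ∈ Nperp, ∃ n : N, v = p + (0, (0, 0), n))
    -- the projection P : V → N with kernel W = R ⊕ K ⊕ N⊥
    (P : (R × (K × Dual ℝ K) × N) →ₗ[ℝ] N)
    (hPdecomp : ∀ v : R × (K × Dual ℝ K) × N,
      ∃ p ∈ Nperp, ((v - (0, (0, 0), P v)) - p).2.1.2 = 0 ∧
        ((v - (0, (0, 0), P v)) - p).2.2 = 0)
    (hPker : ∀ v : R × (K × Dual ℝ K) × N,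
      (∃ p ∈ Nperp, (v - p).2.1.2 = 0 ∧ (v - p).2.2 = 0) → P v = 0) :
    -- P restricted to W^ω intertwines the symplectic forms and is a bijection onto N
    (∀ v v' : R × (K × Dual ℝ K) × N,
      (∀ w, (∃ q ∈ Nperp, (w - q).2.1.2 = 0 ∧ (w - q).2.2 = 0) → ω v w = 0) →
      (∀ w, (∃ q ∈ Nperp, (w - q).2.1.2 = 0 ∧ (w - q).2.2 = 0) → ω v' w = 0) →
      ωN (P v) (P v') = ω v v')
    ∧ (∀ n : N, ∃! v : R × (K × Dual ℝ K) × N,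
        (∀ w, (∃ q ∈ Nperp, (w - q).2.1.2 = 0 ∧ (w - q).2.2 = 0) → ω v w = 0) ∧ P v = n) := by
  have hzero : (0 : R × (K × Dual ℝ K) × N) ∈ Nperp := Nperp.zero_mem
  -- P of a pure N vector
  have hL2 : ∀ n : N, P (0, (0, 0), n) = n := by
    intro n
    obtain ⟨p, hp, h1, h2⟩ := hPdecomp (0, (0, 0), n)
    have hp0 : p = 0 := by
      apply hNperpInd p hp
      have h1' : -p.2.1.2 = 0 := by simpa using h1
      simpa using h1'
    subst hp0
    have h2' : n - P (0, (0, 0), n) = 0 := by simpa using h2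
    rw [sub_eq_zero] at h2'
    exact h2'.symm
  -- P of a vector with only R, K components
  have hL3 : ∀ (r : R) (k : K), P (r, (k, 0), 0) = 0 := by
    intro r k
    exact hPker _ ⟨0, hzero, by simp, by simp⟩
  -- P on vectors with zero R and K* components
  have hA : ∀ v : R × (K × Dual ℝ K) × N, v.1 = 0 → v.2.1.2 = 0 → P v = v.2.2 := by
    intro v h1 h2
    obtain ⟨r, ⟨k, φ⟩, m⟩ := v
    simp only at h1 h2
    subst h1; subst h2
    have hv : ((0 : R), ((k, (0 : Dual ℝ K)), m))
        = ((0 : R), ((k, (0 : Dual ℝ K)), (0 : N))) + ((0 : R), (((0 : K), (0 : Dual ℝ K)), m)) := by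
      simp
    rw [hv, map_add, hL3, hL2, zero_add]
    simp
  -- membership in W^ω forces the R and K* components to vanish
  have hL1 : ∀ v : R × (K × Dual ℝ K) × N,
      (∀ w, (∃ q ∈ Nperp, (w - q).2.1.2 = 0 ∧ (w - q).2.2 = 0) → ω v w = 0) →
      v.1 = 0 ∧ v.2.1.2 = 0 := by
    intro v hv
    constructor
    · apply hRnd
      intro r'
      have h := hv (r', (0, 0), 0) ⟨0, hzero, by simp, by simp⟩
      rw [hω] at h
      simpa using h
    · ext k'
      have h := hv (0, (k', 0), 0) ⟨0, hzero, by simp, by simp⟩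
      rw [hω] at h
      simp only [LinearMap.zero_apply, map_zero] at h ⊢
      linarith [h]
  -- the K* components of Nperp exhaust the dual
  have hsurj : ∀ ψ : Dual ℝ K, ∃ q ∈ Nperp, q.2.1.2 = ψ := by
    intro ψ
    obtain ⟨p, hp, n0, hpn⟩ := hNperpSpan (0, (0, ψ), 0) rfl rfl
    refine ⟨p, hp, ?_⟩
    have := congrArg (fun v : R × (K × Dual ℝ K) × N => v.2.1.2) hpn
    simpa using this.symm
  constructor
  · -- intertwining
    intro v v' hv hv'
    obtain ⟨h1, h2⟩ := hL1 v hv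
    obtain ⟨h1', h2'⟩ := hL1 v' hv'
    rw [hA v h1 h2, hA v' h1' h2', hω, h1, h1', h2, h2']
    simp
  · -- bijectivity
    intro n
    -- construct the K component
    set πK : (R × (K × Dual ℝ K) × N) →ₗ[ℝ] Dual ℝ K :=
      (LinearMap.snd ℝ K (Dual ℝ K)).comp ((LinearMap.fst ℝ (K × Dual ℝ K) N).comp
        (LinearMap.snd ℝ R ((K × Dual ℝ K) × N))) with hπK
    set πN : (R × (K × Dual ℝ K) × N) →ₗ[ℝ] N :=
      (LinearMap.snd ℝ (K × Dual ℝ K) N).comp (LinearMap.snd ℝ R ((K × Dual ℝ K) × N)) with hπN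
    set Φ : Nperp →ₗ[ℝ] Dual ℝ K := πK.comp Nperp.subtype with hΦ
    have hΦapp : ∀ q : Nperp, Φ q = (q : R × (K × Dual ℝ K) × N).2.1.2 := fun q => rfl
    have hΦinj : Function.Injective Φ := by
      intro p q h
      have hm : ((p : R × (K × Dual ℝ K) × N) - q) ∈ Nperp := Nperp.sub_mem p.2 q.2
      have h0 : ((p : R × (K × Dual ℝ K) × N) - q).2.1.2 = 0 := by
        have : (p : R × (K × Dual ℝ K) × N).2.1.2 = (q : R × (K × Dual ℝ K) × N).2.1.2 := h
        simp [this]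
      have := hNperpInd _ hm h0
      exact Subtype.ext (sub_eq_zero.mp this)
    have hΦsurj : Function.Surjective Φ := by
      intro ψ
      obtain ⟨q, hq, hqψ⟩ := hsurj ψ
      exact ⟨⟨q, hq⟩, hqψ⟩
    set e : Nperp ≃ₗ[ℝ] Dual ℝ K := LinearEquiv.ofBijective Φ ⟨hΦinj, hΦsurj⟩ with he
    set f : Dual ℝ (Dual ℝ K) :=
      -(((ωN n).comp (πN.comp Nperp.subtype)).comp (e.symm : Dual ℝ K →ₗ[ℝ] Nperp)) with hf
    set k : K := (Module.evalEquiv ℝ K).symm f with hkdef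
    have hk : ∀ q ∈ Nperp, q.2.1.2 k = -(ωN n q.2.2) := by
      intro q hq
      have h2 : (Φ ⟨q, hq⟩) k = f (Φ ⟨q, hq⟩) :=
        Module.apply_evalEquiv_symm_apply ℝ K (Φ ⟨q, hq⟩) f
      have h3 : e.symm (Φ ⟨q, hq⟩) = ⟨q, hq⟩ := e.symm_apply_apply ⟨q, hq⟩
      have h4 : f (Φ ⟨q, hq⟩) = -(ωN n q.2.2) := by
        rw [hf]
        simp only [LinearMap.neg_apply, LinearMap.comp_apply, LinearEquiv.coe_coe, h3]
        rfl
      rw [← hΦapp ⟨q, hq⟩, h2, h4]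
    set v : R × (K × Dual ℝ K) × N := (0, (k, 0), n) with hv
    have hvperp : ∀ w, (∃ q ∈ Nperp, (w - q).2.1.2 = 0 ∧ (w - q).2.2 = 0) → ω v w = 0 := by
      rintro w ⟨q, hq, hw1, hw2⟩
      have hq1 : w.2.1.2 = q.2.1.2 := by
        have : w.2.1.2 - q.2.1.2 = 0 := by simpa using hw1
        exact sub_eq_zero.mp this
      have hq2 : w.2.2 = q.2.2 := by
        have : w.2.2 - q.2.2 = 0 := by simpa using hw2
        exact sub_eq_zero.mp this
      rw [hω]
      simp only [hv, map_zero, LinearMap.zero_apply]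
      rw [hq1, hq2, hk q hq]
      ring
    have hPv : P v = n := hA v rfl rfl
    refine ⟨v, ⟨hvperp, hPv⟩, ?_⟩
    rintro v' ⟨hv'perp, hv'P⟩
    obtain ⟨h1, h2⟩ := hL1 v' hv'perp
    have hn' : v'.2.2 = n := by rw [← hv'P, hA v' h1 h2]
    have hkk : v'.2.1.1 = k := by
      have hz : ∀ ψ : Dual ℝ K, ψ (v'.2.1.1 - k) = 0 := by
        intro ψ
        obtain ⟨q, hq, hqψ⟩ := hsurj ψ
        have hqW : ∃ q' ∈ Nperp, (q - q').2.1.2 = 0 ∧ (q - q').2.2 = 0 :=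
          ⟨q, hq, by simp, by simp⟩
        have e1 := hv'perp q hqW
        have e2 := hvperp q hqW
        rw [hω] at e1 e2
        rw [h1, h2] at e1
        simp only [hv, map_zero, LinearMap.zero_apply, hn'] at e1 e2
        rw [map_sub, ← hqψ]
        linarith
      have := (Module.forall_dual_apply_eq_zero_iff ℝ (v'.2.1.1 - k)).mp hz
      exact sub_eq_zero.mp this
    exact Prod.ext h1 (Prod.ext (Prod.ext hkk h2) hn')
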